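/- arXiv:2010.10421 — 2 statements merged into one kernel-verified Lean document; each statement's English description precedes it below -/
import Mathlib

section
/- (Small gain theorem.) Let λ ∈ (0,1), let m ≥ 1, and let s₁, …, s_m be sequences of vectors in ℝⁿ. Suppose there exist nonnegative constants γ₁, …, γ_m and ω₁, …, ω_m such that for every j ∈ {1,…,m} (with s_{m+1} := s₁) and every K ≥ 0 one has ‖s_{j+1}‖^{λ,K} ≤ γ_j ‖s_j‖^{λ,K} + ω_j, and suppose γ₁·γ₂·⋯·γ_m < 1. Then for each j ∈ {1,…,m} there exists a constant c_j ≥ 0 such that ‖s_j^k‖ ≤ c_j λ^k for all k ≥ 0 (equivalently ‖s_j‖^λ ≤ c_j). -/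
open Matrix
open scoped RealInnerProductSpace

/-- The averaging matrix `P = (1/n)·11ᵀ`. -/
noncomputable def avgMatrix (n : ℕ) : Matrix (Fin n) (Fin n) ℝ :=
  Matrix.of fun _ _ => (n : ℝ)⁻¹

/-- Action of a matrix on a vector of `ℝⁿ` with the Euclidean norm. -/
noncomputable def mulE {n : ℕ} (M : Matrix (Fin n) (Fin n) ℝ)
    (v : EuclideanSpace ℝ (Fin n)) : EuclideanSpace ℝ (Fin n) :=
  Matrix.toEuclideanLin M v

/-- Induced 2-norm of a matrix. -/
noncomputable def opNorm2 {n : ℕ} (M : Matrix (Fin n) (Fin n) ℝ) : ℝ :=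
  ‖LinearMap.toContinuousLinearMap (Matrix.toEuclideanLin M)‖

/-- `‖s‖^{λ,K} = max_{0 ≤ k ≤ K} ‖s^k‖/λ^k`. -/
noncomputable def seqNormK {n : ℕ} (s : ℕ → EuclideanSpace ℝ (Fin n)) (lam : ℝ) (K : ℕ) : ℝ :=
  (Finset.range (K + 1)).sup' ⟨0, Finset.mem_range.mpr (Nat.succ_pos K)⟩ (fun k => ‖s k‖ / lam ^ k)

open Fin.NatCast

/-- **Small gain theorem.** -/
theorem small_gain_theorem {n m : ℕ} (hm : 1 ≤ m)
    (lam : ℝ) (hlam : lam ∈ Set.Ioo (0 : ℝ) 1)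
    (s : Fin m → ℕ → EuclideanSpace ℝ (Fin n))
    (γ ω : Fin m → ℝ) (hγ : ∀ j, 0 ≤ γ j) (hω : ∀ j, 0 ≤ ω j)
    (hchain : ∀ (j : Fin m) (K : ℕ),
      seqNormK (s (finRotate m j)) lam K ≤ γ j * seqNormK (s j) lam K + ω j)
    (hprod : ∏ j, γ j < 1) :
    ∀ j : Fin m, ∃ c : ℝ, 0 ≤ c ∧ ∀ k : ℕ, ‖s j k‖ ≤ c * lam ^ k := by
  obtain ⟨hl0, hl1⟩ := hlam
  obtain ⟨m', rfl⟩ : ∃ m'', m = m'' + 1 := ⟨m - 1, (Nat.succ_pred_eq_of_pos hm).symm⟩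
  intro j
  -- iterates of finRotate
  have hiter : ∀ t : ℕ, (finRotate (m' + 1))^[t] j = j + (t : Fin (m' + 1)) := by
    intro t
    induction t with
    | zero => simp
    | succ t ih =>
      rw [Function.iterate_succ_apply', ih, finRotate_succ_apply]
      push_cast
      open Fin.CommRing in ring
  have hfix : (finRotate (m' + 1))^[m' + 1] j = j := by
    rw [hiter, Fin.natCast_self, add_zero]
  -- chaining
  have key : ∀ t : ℕ, ∃ b : ℝ, 0 ≤ b ∧ ∀ K,
      seqNormK (s ((finRotate (m' + 1))^[t] j)) lam K ≤
        (∏ i ∈ Finset.range t, γ ((finRotate (m' + 1))^[i] j)) * seqNormK (s j) lam K + b := by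
    intro t
    induction t with
    | zero => exact ⟨0, le_refl 0, fun K => by simp⟩
    | succ t ih =>
      obtain ⟨b, hb, hK⟩ := ih
      refine ⟨γ ((finRotate (m' + 1))^[t] j) * b + ω ((finRotate (m' + 1))^[t] j),
        by have := hγ ((finRotate (m' + 1))^[t] j); have := hω ((finRotate (m' + 1))^[t] j); positivity,
        fun K => ?_⟩
      have h1 := hchain ((finRotate (m' + 1))^[t] j) K
      rw [Function.iterate_succ_apply']
      calc seqNormK (s (finRotate (m' + 1) ((finRotate (m' + 1))^[t] j))) lam K
          ≤ γ ((finRotate (m' + 1))^[t] j) * seqNormK (s ((finRotate (m' + 1))^[t] j)) lam K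
              + ω ((finRotate (m' + 1))^[t] j) := h1
        _ ≤ γ ((finRotate (m' + 1))^[t] j) *
              ((∏ i ∈ Finset.range t, γ ((finRotate (m' + 1))^[i] j)) * seqNormK (s j) lam K + b)
              + ω ((finRotate (m' + 1))^[t] j) := by
            gcongr
            · exact hγ _
            · exact hK K
        _ = _ := by rw [Finset.prod_range_succ]; ring
  -- product over the full cycle
  have hprodcycle : ∏ i ∈ Finset.range (m' + 1), γ ((finRotate (m' + 1))^[i] j) = ∏ i, γ i := by
    rw [← Fin.prod_univ_eq_prod_range (fun i => γ ((finRotate (m' + 1))^[i] j)) (m' + 1)]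
    calc ∏ i : Fin (m' + 1), γ ((finRotate (m' + 1))^[(i : ℕ)] j)
        = ∏ i : Fin (m' + 1), γ (j + i) := by
          refine Finset.prod_congr rfl fun i _ => ?_
          rw [hiter, Fin.cast_val_eq_self]
      _ = ∏ i, γ i := Equiv.prod_comp (Equiv.addLeft j) γ
  obtain ⟨b, hb, hK⟩ := key (m' + 1)
  set g : ℝ := ∏ i, γ i with hg
  have hg0 : 0 ≤ g := Finset.prod_nonneg fun i _ => hγ i
  have hbound : ∀ K, seqNormK (s j) lam K ≤ b / (1 - g) := by
    intro K
    have h := hK K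
    rw [hfix, hprodcycle] at h
    rw [le_div_iff₀ (by linarith)]
    nlinarith [h]
  refine ⟨b / (1 - g), div_nonneg hb (by linarith), fun k => ?_⟩
  have hmem : k ∈ Finset.range (k + 1) := Finset.self_mem_range_succ k
  have h2 : ‖s j k‖ / lam ^ k ≤ seqNormK (s j) lam k :=
    Finset.le_sup' (fun i => ‖s j i‖ / lam ^ i) hmem
  have h3 := (h2.trans (hbound k))
  have hpow : (0 : ℝ) < lam ^ k := pow_pos hl0 k
  rw [div_le_iff₀ hpow] at h3
  exact h3
end

section
/- Let μ, L, β > 0 and c₃ = 1/√(2L(1/β + 1/μ)). Let λ ∈ (0,1) satisfy 2L(1/λ² − 1) < c₃λμ/((c₃+1)(λ+1)), and let ρ satisfy 2L(1/λ² − 1) < ρ < c₃λμ/((c₃+1)(λ+1)). Then (i) λμ − ρ(λ+1) > 0, so that c₁ = (λ+1)/(λμ − ρ(λ+1)) > 0, and (ii) c₂ = 1 + ρ/L − 1/λ² − ρ³c₁²(1/β + 1/μ) > 0. -/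
open Matrix
open scoped RealInnerProductSpace

/-- Under the parameter conditions, `c₁ > 0` and `c₂ > 0`. -/
theorem constants_positive (μ L β lam ρ c₃ : ℝ)
    (hμ : 0 < μ) (hL : 0 < L) (hβ : 0 < β)
    (hc₃ : c₃ = 1 / Real.sqrt (2 * L * (1 / β + 1 / μ)))
    (hlam : lam ∈ Set.Ioo (0 : ℝ) 1)
    (hcond : 2 * L * (1 / lam ^ 2 - 1) < c₃ * lam * μ / ((c₃ + 1) * (lam + 1)))
    (hρ1 : 2 * L * (1 / lam ^ 2 - 1) < ρ)
    (hρ2 : ρ < c₃ * lam * μ / ((c₃ + 1) * (lam + 1))) :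
    0 < lam * μ - ρ * (lam + 1) ∧
    0 < (lam + 1) / (lam * μ - ρ * (lam + 1)) ∧
    0 < 1 + ρ / L - 1 / lam ^ 2 -
      ρ ^ 3 * ((lam + 1) / (lam * μ - ρ * (lam + 1))) ^ 2 * (1 / β + 1 / μ) := by

  obtain ⟨hlam0, hlam1⟩ := hlam
  have hS : 0 < 1 / β + 1 / μ := by positivity
  have h2LS : 0 < 2 * L * (1 / β + 1 / μ) := by positivity
  have hc₃pos : 0 < c₃ := by rw [hc₃]; positivity
  have hc₃sq : c₃ ^ 2 * (2 * L * (1 / β + 1 / μ)) = 1 := by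
    rw [hc₃, div_pow, one_pow, Real.sq_sqrt h2LS.le]
    field_simp
  have hA : 0 < 1 / lam ^ 2 - 1 := by
    have h1 : lam ^ 2 < 1 := by nlinarith
    have h2 : 1 < 1 / lam ^ 2 := one_lt_one_div (by positivity) h1
    linarith
  have hρpos : 0 < ρ := lt_trans (by positivity) hρ1
  have hden : 0 < (c₃ + 1) * (lam + 1) := by positivity
  have hρ2' : ρ * ((c₃ + 1) * (lam + 1)) < c₃ * lam * μ := (lt_div_iff₀ hden).mp hρ2
  have h1 : 0 < lam * μ - ρ * (lam + 1) := by nlinarith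
  have hc₁ : 0 < (lam + 1) / (lam * μ - ρ * (lam + 1)) := by positivity
  refine ⟨h1, hc₁, ?_⟩
  set c₁ := (lam + 1) / (lam * μ - ρ * (lam + 1)) with hc₁def
  have hkey : ρ * c₁ < c₃ := by
    rw [hc₁def, mul_div_assoc', div_lt_iff₀ h1]
    nlinarith
  have hsq : (ρ * c₁) ^ 2 < c₃ ^ 2 := by nlinarith [mul_pos hρpos hc₁]
  have h3 : ρ ^ 3 * c₁ ^ 2 * (1 / β + 1 / μ) < ρ / (2 * L) := by
    have heq : ρ ^ 3 * c₁ ^ 2 * (1 / β + 1 / μ) = ρ * ((ρ * c₁) ^ 2 * (1 / β + 1 / μ)) := by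
      ring
    rw [heq]
    have h4 : (ρ * c₁) ^ 2 * (1 / β + 1 / μ) < c₃ ^ 2 * (1 / β + 1 / μ) :=
      mul_lt_mul_of_pos_right hsq hS
    have h5 : c₃ ^ 2 * (1 / β + 1 / μ) = 1 / (2 * L) := by
      rw [eq_div_iff (by positivity : (2 * L : ℝ) ≠ 0)]
      linear_combination hc₃sq
    rw [div_eq_mul_one_div ρ (2 * L)]
    exact mul_lt_mul_of_pos_left (h5 ▸ h4) hρpos
  have hρL : 1 / lam ^ 2 - 1 < ρ / (2 * L) := by
    rw [lt_div_iff₀ (by positivity)]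
    nlinarith
  have hρL2 : ρ / L = 2 * (ρ / (2 * L)) := by
    field_simp
  linarith
end
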